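/- Admissibility of lifted simulation for ≤-chains: let R be a relation on a countable set S and R̂ its probabilistic lifting. If (μ_i) is an increasing ≤-chain of sub-distributions with supremum μ = ⊔ μ_i (pointwise), and μ_i R̂ ν for all i, then μ R̂ ν. -/

import Mathlib

open scoped ENNReal

/-- A discrete sub-probability distribution: total mass at most 1. -/
def SubDist {S : Type*} (μ : S → ℝ≥0∞) : Prop := ∑' x, μ x ≤ 1

/-- Probabilistic lifting of a relation via a matching (coupling). -/
def Lift {S : Type*} (R : S → S → Prop) (μ ν : S → ℝ≥0∞) : Prop :=
  ∃ m : S → S → ℝ≥0∞,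
    (∀ x y, m x y ≠ 0 → R x y) ∧
    (∀ x, (∑' y, m x y) = μ x) ∧
    (∀ y, (∑' x, m x y) ≤ ν y)

/-- Admissibility of lifted simulation for `≤`-chains: if an increasing chain
of sub-distributions is lift-related to `ν`, so is its pointwise supremum. -/
theorem stmt17 {S : Type*} [Countable S] (R : S → S → Prop)
    (μs : ℕ → S → ℝ≥0∞) (hchain : ∀ i x, μs i x ≤ μs (i + 1) x)
    (hsub : ∀ i, SubDist (μs i))
    (μ ν : S → ℝ≥0∞) (hμ : ∀ x, μ x = ⨆ i, μs i x)
    (hμsub : SubDist μ) (hν : SubDist ν)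
    (h : ∀ i, Lift R (μs i) ν) :
    Lift R μ ν := by
  classical
  -- choose couplings
  choose m hmR hmrow hmcol using h
  -- sequential compactness of the product space (S × S) → ℝ≥0∞
  set M : ℕ → (S × S) → ℝ≥0∞ := fun n p => m n p.1 p.2 with hM
  obtain ⟨L, -, φ, hφ, hL⟩ :=
    (isCompact_univ : IsCompact (Set.univ : Set ((S × S) → ℝ≥0∞))).tendsto_subseq
      (fun n => Set.mem_univ (M n))
  have hLpt : ∀ x y, Filter.Tendsto (fun n => m (φ n) x y) Filter.atTop (nhds (L (x, y))) := by
    intro x y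
    have := tendsto_pi_nhds.1 hL (x, y)
    simpa [M, Function.comp] using this
  -- μs i x is monotone with supremum μ x
  have hmono : ∀ x, Monotone fun i => μs i x := fun x =>
    monotone_nat_of_le_succ (fun i => hchain i x)
  have hμtend : ∀ x, Filter.Tendsto (fun n => μs (φ n) x) Filter.atTop (nhds (μ x)) := by
    intro x
    have h1 : Filter.Tendsto (fun i => μs i x) Filter.atTop (nhds (μ x)) := by
      rw [hμ x]; exact tendsto_atTop_iSup (hmono x)
    exact h1.comp hφ.tendsto_atTop
  refine ⟨fun x y => L (x, y), ?_, ?_, ?_⟩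
  · -- relation support
    intro x y hne
    by_contra hR
    have hz : ∀ n, m (φ n) x y = 0 := by
      intro n
      by_contra h0
      exact hR (hmR (φ n) x y h0)
    have : Filter.Tendsto (fun n => m (φ n) x y) Filter.atTop (nhds 0) := by
      simpa [hz] using tendsto_const_nhds (α := ℝ≥0∞) (f := Filter.atTop (α := ℕ)) (a := 0)
    exact hne (tendsto_nhds_unique (hLpt x y) this)
  · -- row marginals: ∑' y, L (x,y) = μ x
    intro x
    apply le_antisymm
    · -- ≤ : by finite approximation
      rw [ENNReal.tsum_eq_iSup_sum]
      refine iSup_le fun K => ?_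
      have hKt : Filter.Tendsto (fun n => ∑ y ∈ K, m (φ n) x y) Filter.atTop
          (nhds (∑ y ∈ K, L (x, y))) := tendsto_finset_sum _ fun y _ => hLpt x y
      refine le_of_tendsto hKt (Filter.Eventually.of_forall fun n => ?_)
      calc ∑ y ∈ K, m (φ n) x y ≤ ∑' y, m (φ n) x y := ENNReal.sum_le_tsum K
        _ = μs (φ n) x := hmrow (φ n) x
        _ ≤ μ x := by rw [hμ x]; exact le_iSup (fun i => μs i x) (φ n)
    · -- ≥ : tightness via ν
      have hνfin : (∑' y, ν y) ≠ ∞ := ne_top_of_le_ne_top ENNReal.one_ne_top hν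
      refine ENNReal.le_of_forall_pos_le_add fun ε hε _ => ?_
      -- find a finite set K with small ν-tail
      have htail := ENNReal.tendsto_tsum_compl_atTop_zero (f := ν) hνfin
      have hεpos : (0 : ℝ≥0∞) < ε := by exact_mod_cast hε
      obtain ⟨K, hK⟩ := (Filter.eventually_atTop.1
        ((ENNReal.nhds_zero_basis.tendsto_right_iff.1 htail) ε hεpos)).imp
        (fun K hK => hK K le_rfl)
      -- for every n : μs n x ≤ ∑_{y ∈ K} m n x y + tail
      have key : ∀ n, μs n x ≤ (∑ y ∈ K, m n x y) + ∑' y : {y // y ∉ K}, ν y := by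
        intro n
        have hsplit : (∑' y : (↑K : Set S), m n x y) + (∑' y : (↑(↑K : Set S)ᶜ : Set S), m n x y)
            = ∑' y, m n x y :=
          Summable.tsum_add_tsum_compl (f := fun y => m n x y) ENNReal.summable ENNReal.summable
        have h1 : (∑' y : (↑K : Set S), m n x y) = ∑ y ∈ K, m n x y := by
          exact (Finset.tsum_subtype K fun y => m n x y)
        have h2 : (∑' y : (↑(↑K : Set S)ᶜ : Set S), m n x y) ≤ ∑' y : {y // y ∉ K}, ν y := by
          have hee : (↑(↑K : Set S)ᶜ : Set S) = {y | y ∉ K} := by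
            ext y; simp
          rw [show (∑' y : {y // y ∉ K}, ν y) = ∑' y : (↑(↑K : Set S)ᶜ : Set S), ν y by
            congr 1]
          refine ENNReal.tsum_le_tsum fun y => ?_
          calc m n x y.1 ≤ ∑' x', m n x' y.1 := ENNReal.le_tsum x
            _ ≤ ν y.1 := hmcol n y.1
        calc μs n x = ∑' y, m n x y := (hmrow n x).symm
          _ = (∑' y : (↑K : Set S), m n x y) + (∑' y : (↑(↑K : Set S)ᶜ : Set S), m n x y) :=
            hsplit.symm
          _ ≤ (∑ y ∈ K, m n x y) + ∑' y : {y // y ∉ K}, ν y := by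
            rw [h1]; exact add_le_add_right h2 _
      -- take limits along the subsequence
      have hKt : Filter.Tendsto (fun n => (∑ y ∈ K, m (φ n) x y) + ∑' y : {y // y ∉ K}, ν y)
          Filter.atTop (nhds ((∑ y ∈ K, L (x, y)) + ∑' y : {y // y ∉ K}, ν y)) :=
        (tendsto_finset_sum _ fun y _ => hLpt x y).add tendsto_const_nhds
      have hlim : μ x ≤ (∑ y ∈ K, L (x, y)) + ∑' y : {y // y ∉ K}, ν y :=
        le_of_tendsto_of_tendsto' (hμtend x) hKt fun n => key (φ n)
      calc μ x ≤ (∑ y ∈ K, L (x, y)) + ∑' y : {y // y ∉ K}, ν y := hlim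
        _ ≤ (∑' y, L (x, y)) + ε := add_le_add (ENNReal.sum_le_tsum K) hK.le
  · -- column marginals
    intro y
    rw [ENNReal.tsum_eq_iSup_sum]
    refine iSup_le fun K => ?_
    have hKt : Filter.Tendsto (fun n => ∑ x ∈ K, m (φ n) x y) Filter.atTop
        (nhds (∑ x ∈ K, L (x, y))) := tendsto_finset_sum _ fun x _ => hLpt x y
    refine le_of_tendsto hKt (Filter.Eventually.of_forall fun n => ?_)
    calc ∑ x ∈ K, m (φ n) x y ≤ ∑' x, m (φ n) x y := ENNReal.sum_le_tsum K
      _ ≤ ν y := hmcol (φ n) y
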